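/- For σ ∈ (0,1], the function Ψ_σ(s) = (1/√(2π))·∫_0^1 e^{-s²y²/2}/(1+σ²y²) dy takes values in [0, 1/√(2π)] for every real s, and for every integer n ≥ 1 its n-th derivative satisfies |Ψ_σ^{(n)}(s)| ≤ n^{n/2} for every real s. -/

import Mathlib

open MeasureTheory intervalIntegral Metric

noncomputable def PsiFn (σ s : ℝ) : ℝ :=
  (Real.sqrt (2 * Real.pi))⁻¹ * ∫ y in (0:ℝ)..1, Real.exp (-s ^ 2 * y ^ 2 / 2) / (1 + σ ^ 2 * y ^ 2)

/-- Complex extension of `PsiFn σ`. -/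
noncomputable def PsiC (σ : ℝ) (z : ℂ) : ℂ :=
  ((Real.sqrt (2 * Real.pi) : ℝ) : ℂ)⁻¹ *
    ∫ y in (0:ℝ)..1, Complex.exp (-z ^ 2 * (y : ℂ) ^ 2 / 2) / (1 + (σ : ℂ) ^ 2 * (y : ℂ) ^ 2)

lemma psi_denom_cast (σ y : ℝ) :
    (1 : ℂ) + (σ : ℂ) ^ 2 * (y : ℂ) ^ 2 = ((1 + σ ^ 2 * y ^ 2 : ℝ) : ℂ) := by
  push_cast; ring

lemma psi_denom_one_le (σ y : ℝ) : (1 : ℝ) ≤ 1 + σ ^ 2 * y ^ 2 := by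
  nlinarith [sq_nonneg (σ * y)]

lemma psi_denom_norm_ge (σ y : ℝ) : (1 : ℝ) ≤ ‖(1 : ℂ) + (σ : ℂ) ^ 2 * (y : ℂ) ^ 2‖ := by
  rw [psi_denom_cast, Complex.norm_real, Real.norm_eq_abs, abs_of_nonneg (by positivity)]
  exact psi_denom_one_le σ y

lemma psi_exp_norm (z : ℂ) (y : ℝ) :
    ‖Complex.exp (-z ^ 2 * (y : ℂ) ^ 2 / 2)‖ = Real.exp ((z.im ^ 2 - z.re ^ 2) * y ^ 2 / 2) := by
  rw [Complex.norm_exp]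
  congr 1
  have : -z ^ 2 * (y : ℂ) ^ 2 / 2 = -(z * (y : ℂ)) ^ 2 / 2 := by ring
  rw [this]
  simp [Complex.div_re, Complex.normSq, pow_two, Complex.mul_re, Complex.mul_im]
  ring

lemma psi_exp_norm_le {z : ℂ} {R : ℝ} (hR : |z.im| ≤ R) {y : ℝ} (hy : y ∈ Set.Ioc (0:ℝ) 1) :
    ‖Complex.exp (-z ^ 2 * (y : ℂ) ^ 2 / 2)‖ ≤ Real.exp (R ^ 2 / 2) := by
  rw [psi_exp_norm]
  apply Real.exp_le_exp.2
  have h1 : z.im ^ 2 ≤ R ^ 2 := sq_le_sq' (neg_le_of_abs_le hR |>.trans_eq' rfl |>.trans le_rfl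
    |> fun h => h) (le_of_abs_le hR)
  have hy2 : y ^ 2 ≤ 1 := by nlinarith [hy.1, hy.2]
  nlinarith [sq_nonneg z.re, sq_nonneg y, sq_nonneg z.im, abs_nonneg z.im]

lemma psiC_integrand_norm_le {σ : ℝ} {z : ℂ} {R : ℝ} (hR : |z.im| ≤ R) {y : ℝ}
    (hy : y ∈ Set.Ioc (0:ℝ) 1) :
    ‖Complex.exp (-z ^ 2 * (y : ℂ) ^ 2 / 2) / (1 + (σ : ℂ) ^ 2 * (y : ℂ) ^ 2)‖ ≤
      Real.exp (R ^ 2 / 2) := by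
  rw [norm_div]
  calc ‖Complex.exp (-z ^ 2 * (y : ℂ) ^ 2 / 2)‖ / ‖(1 : ℂ) + (σ : ℂ) ^ 2 * (y : ℂ) ^ 2‖
      ≤ ‖Complex.exp (-z ^ 2 * (y : ℂ) ^ 2 / 2)‖ :=
        div_le_self (norm_nonneg _) (psi_denom_norm_ge σ y)
    _ ≤ Real.exp (R ^ 2 / 2) := psi_exp_norm_le hR hy

lemma psiC_norm_le (σ : ℝ) {z : ℂ} {R : ℝ} (hR : |z.im| ≤ R) :
    ‖PsiC σ z‖ ≤ (Real.sqrt (2 * Real.pi))⁻¹ * Real.exp (R ^ 2 / 2) := by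
  rw [PsiC, norm_mul]
  have h1 : ‖((Real.sqrt (2 * Real.pi) : ℝ) : ℂ)⁻¹‖ = (Real.sqrt (2 * Real.pi))⁻¹ := by
    rw [norm_inv, Complex.norm_real, Real.norm_eq_abs, abs_of_nonneg (Real.sqrt_nonneg _)]
  rw [h1]
  apply mul_le_mul_of_nonneg_left _ (by positivity)
  calc ‖∫ y in (0:ℝ)..1, Complex.exp (-z ^ 2 * (y:ℂ) ^ 2 / 2) / (1 + (σ:ℂ) ^ 2 * (y:ℂ) ^ 2)‖
      ≤ Real.exp (R ^ 2 / 2) * |(1:ℝ) - 0| := by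
        apply intervalIntegral.norm_integral_le_of_norm_le_const
        intro y hy
        rw [Set.uIoc_of_le (by norm_num : (0:ℝ) ≤ 1)] at hy
        exact psiC_integrand_norm_le hR hy
    _ = Real.exp (R ^ 2 / 2) := by norm_num

lemma psiC_integrand_continuous (σ : ℝ) (x : ℂ) :
    Continuous fun y : ℝ =>
      Complex.exp (-x ^ 2 * (y : ℂ) ^ 2 / 2) / (1 + (σ : ℂ) ^ 2 * (y : ℂ) ^ 2) := by
  apply Continuous.div
  · exact Complex.continuous_exp.comp (by continuity)
  · continuity
  · intro y
    intro h
    have := psi_denom_norm_ge σ y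
    rw [h] at this
    simp at this
    linarith

lemma psiC_differentiable (σ : ℝ) : Differentiable ℂ (PsiC σ) := by
  intro z₀
  apply DifferentiableAt.const_mul
  set B : ℝ := (‖z₀‖ + 1) * Real.exp ((‖z₀‖ + 1) ^ 2 / 2) with hB
  have key := intervalIntegral.hasDerivAt_integral_of_dominated_loc_of_deriv_le
    (F := fun (x : ℂ) (y : ℝ) =>
      Complex.exp (-x ^ 2 * (y : ℂ) ^ 2 / 2) / (1 + (σ : ℂ) ^ 2 * (y : ℂ) ^ 2))
    (F' := fun (x : ℂ) (y : ℝ) =>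
      Complex.exp (-x ^ 2 * (y : ℂ) ^ 2 / 2) * (-x * (y : ℂ) ^ 2) /
        (1 + (σ : ℂ) ^ 2 * (y : ℂ) ^ 2))
    (x₀ := z₀) (a := 0) (b := 1) (μ := volume) (bound := fun _ => B)
    (s := ball z₀ 1) (ball_mem_nhds z₀ one_pos) ?_ ?_ ?_ ?_ ?_ ?_
  · exact key.2.differentiableAt
  · filter_upwards with x
    exact ((psiC_integrand_continuous σ x).aestronglyMeasurable).restrict
  · exact ((psiC_integrand_continuous σ z₀)).intervalIntegrable 0 1
  · apply Continuous.aestronglyMeasurable ?_ |>.restrict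
    apply Continuous.div
    · exact (Complex.continuous_exp.comp (by continuity)).mul (by continuity)
    · continuity
    · intro y h
      have := psi_denom_norm_ge σ y
      rw [h] at this; simp at this; linarith
  · filter_upwards with y hy x hx
    rw [Set.uIoc_of_le (by norm_num : (0:ℝ) ≤ 1)] at hy
    have hxn : ‖x‖ ≤ ‖z₀‖ + 1 := by
      have := mem_ball_iff_norm.mp hx
      have h2 := norm_sub_norm_le x z₀
      linarith
    have him : |x.im| ≤ ‖z₀‖ + 1 := le_trans (Complex.abs_im_le_norm x) hxn
    have hy2 : (y : ℝ) ^ 2 ≤ 1 := by nlinarith [hy.1, hy.2]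
    calc ‖Complex.exp (-x ^ 2 * (y:ℂ) ^ 2 / 2) * (-x * (y:ℂ) ^ 2) /
            (1 + (σ:ℂ) ^ 2 * (y:ℂ) ^ 2)‖
        = ‖Complex.exp (-x ^ 2 * (y:ℂ) ^ 2 / 2) / (1 + (σ:ℂ) ^ 2 * (y:ℂ) ^ 2)‖ *
            ‖-x * (y:ℂ) ^ 2‖ := by
          rw [← norm_mul]; ring_nf
      _ ≤ Real.exp ((‖z₀‖ + 1) ^ 2 / 2) * (‖z₀‖ + 1) := by
          apply mul_le_mul (psiC_integrand_norm_le him hy) ?_ (norm_nonneg _) (by positivity)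
          rw [norm_mul, norm_neg, norm_pow, Complex.norm_real, Real.norm_eq_abs]
          calc ‖x‖ * |y| ^ 2 ≤ (‖z₀‖ + 1) * 1 := by
                apply mul_le_mul hxn ?_ (by positivity) (by positivity)
                rw [sq_abs]; exact hy2
            _ = ‖z₀‖ + 1 := mul_one _
      _ = B := by rw [hB]; ring
  · exact intervalIntegrable_const
  · filter_upwards with y hy x hx
    have h1 : HasDerivAt (fun x : ℂ => -x ^ 2 * (y : ℂ) ^ 2 / 2) (-x * (y : ℂ) ^ 2) x := by
      have := (((hasDerivAt_pow 2 x).neg.mul_const ((y : ℂ) ^ 2)).div_const 2)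
      refine this.congr_deriv ?_
      rw [show (2:ℕ) - 1 = 1 from rfl]; push_cast; ring
    exact (h1.cexp.div_const _)

lemma psiC_eq_ofReal (σ s : ℝ) : PsiC σ (s : ℂ) = ((PsiFn σ s : ℝ) : ℂ) := by
  rw [PsiC, PsiFn]
  push_cast
  congr 1
  rw [← intervalIntegral.integral_ofReal]
  apply intervalIntegral.integral_congr
  intro y _
  push_cast [Complex.ofReal_exp]
  rfl

lemma psiC_iteratedDeriv_differentiable (σ : ℝ) (n : ℕ) :
    Differentiable ℂ (iteratedDeriv n (PsiC σ)) := by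
  induction n with
  | zero => simpa [iteratedDeriv_zero] using psiC_differentiable σ
  | succ n ih =>
    rw [iteratedDeriv_succ]
    exact Complex.analyticOnNhd_univ_iff_differentiable.mp
      ((Complex.analyticOnNhd_univ_iff_differentiable.mpr ih).deriv)

lemma psi_iteratedDeriv_eq (σ : ℝ) (n : ℕ) (s : ℝ) :
    iteratedDeriv n (PsiFn σ) s = (iteratedDeriv n (PsiC σ) (s : ℂ)).re := by
  induction n generalizing s with
  | zero => simp [iteratedDeriv_zero, psiC_eq_ofReal]
  | succ n ih =>
    rw [iteratedDeriv_succ, iteratedDeriv_succ]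
    have hd : HasDerivAt (iteratedDeriv n (PsiC σ)) (deriv (iteratedDeriv n (PsiC σ)) (s : ℂ))
        (s : ℂ) := (psiC_iteratedDeriv_differentiable σ n (s : ℂ)).hasDerivAt
    have := hd.real_of_complex
    have heq : (fun x : ℝ => (iteratedDeriv n (PsiC σ) (x : ℂ)).re) = iteratedDeriv n (PsiFn σ) :=
      funext fun x => (ih x).symm
    rw [heq] at this
    exact this.deriv

/-- Cauchy estimate for entire functions. -/
lemma cauchy_estimate {f : ℂ → ℂ} (hf : Differentiable ℂ f) (c : ℂ) {R C : ℝ}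
    (hR : 0 < R) (hC : 0 ≤ C) (hb : ∀ θ : ℝ, ‖f (circleMap c R θ)‖ ≤ C) (n : ℕ) :
    ‖iteratedDeriv n f c‖ ≤ n.factorial * C / R ^ n := by
  set R' : NNReal := ⟨R, hR.le⟩ with hR'
  have hRpos : (0 : NNReal) < R' := by exact_mod_cast hR
  have h := hf.hasFPowerSeriesOnBall c hRpos
  set p := cauchyPowerSeries f c (R' : ℝ) with hp
  have hfact := h.factorial_smul (1 : ℂ) n
  have hiter : iteratedDeriv n f c = iteratedFDeriv ℂ n f c fun _ => 1 :=
    iteratedDeriv_eq_iteratedFDeriv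
  rw [hiter, ← hfact]
  have hnorm : ‖n.factorial • p n (fun _ => (1 : ℂ))‖ =
      (n.factorial : ℝ) * ‖p n (fun _ => (1 : ℂ))‖ := by
    rw [nsmul_eq_mul, norm_mul]
    norm_num
  rw [hnorm]
  have hcoef : ‖p n (fun _ => (1 : ℂ))‖ ≤ C / R ^ n := by
    have h1 : ‖p n (fun _ => (1 : ℂ))‖ ≤ ‖p n‖ := by
      have := (p n).le_opNorm (fun _ => (1 : ℂ))
      simpa using this
    have h2 := norm_cauchyPowerSeries_le f c (R' : ℝ) n
    have hRR : (R' : ℝ) = R := rfl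
    rw [hRR] at h2
    have hint : (∫ θ : ℝ in (0)..2 * Real.pi, ‖f (circleMap c R θ)‖) ≤ 2 * Real.pi * C := by
      calc (∫ θ : ℝ in (0)..2 * Real.pi, ‖f (circleMap c R θ)‖)
          ≤ ∫ _ : ℝ in (0)..2 * Real.pi, C := by
            apply intervalIntegral.integral_mono_on Real.two_pi_pos.le
            · exact ((hf.continuous.comp (continuous_circleMap c R)).norm).intervalIntegrable 0 _
            · exact intervalIntegrable_const
            · intro θ _; exact hb θ
        _ = 2 * Real.pi * C := by simp [mul_comm]
    have hRabs : |R| = R := abs_of_pos hR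
    calc ‖p n (fun _ => (1 : ℂ))‖ ≤ ‖p n‖ := h1
      _ ≤ ((2 * Real.pi)⁻¹ * ∫ θ : ℝ in (0)..2 * Real.pi, ‖f (circleMap c R θ)‖) * |R|⁻¹ ^ n :=
          h2
      _ ≤ ((2 * Real.pi)⁻¹ * (2 * Real.pi * C)) * |R|⁻¹ ^ n := by
          apply mul_le_mul_of_nonneg_right _ (by positivity)
          exact mul_le_mul_of_nonneg_left hint (by positivity)
      _ = C / R ^ n := by
          rw [hRabs, inv_mul_cancel_left₀ Real.two_pi_pos.ne', inv_pow, div_eq_mul_inv]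
  calc (n.factorial : ℝ) * ‖p n (fun _ => (1 : ℂ))‖ ≤ (n.factorial : ℝ) * (C / R ^ n) :=
        mul_le_mul_of_nonneg_left hcoef (by positivity)
    _ = n.factorial * C / R ^ n := by ring

lemma factorial_le_stirling (n : ℕ) (hn : 1 ≤ n) :
    (n.factorial : ℝ) ≤ Real.exp 1 * Real.sqrt n * (n / Real.exp 1) ^ n := by
  obtain ⟨m, rfl⟩ : ∃ m, n = m + 1 := ⟨n - 1, by omega⟩
  have h1 : Stirling.stirlingSeq (m + 1) ≤ Stirling.stirlingSeq 1 := by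
    have := Stirling.stirlingSeq'_antitone (Nat.zero_le m)
    simpa using this
  rw [Stirling.stirlingSeq_one] at h1
  rw [Stirling.stirlingSeq] at h1
  set n := m + 1 with hn'
  have hnpos : (0 : ℝ) < n := by positivity
  have hden : (0 : ℝ) < Real.sqrt (2 * n) * (n / Real.exp 1) ^ n := by positivity
  rw [div_le_iff₀ hden] at h1
  calc (n.factorial : ℝ) ≤ Real.exp 1 / Real.sqrt 2 * (Real.sqrt (2 * n) *
        (n / Real.exp 1) ^ n) := h1
    _ = Real.exp 1 * Real.sqrt n * (n / Real.exp 1) ^ n := by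
        rw [Real.sqrt_mul (by norm_num : (0:ℝ) ≤ 2)]
        field_simp

lemma two_pi_ge_e : Real.exp 1 ≤ 2 * Real.pi := by
  have h1 : Real.exp 1 < 2.7182818286 := Real.exp_one_lt_d9
  have h2 : (3 : ℝ) < Real.pi := Real.pi_gt_three
  nlinarith

lemma exp_ge_e_mul (n : ℕ) (hn : 1 ≤ n) : Real.exp 1 * n ≤ Real.exp n := by
  have h := Real.add_one_le_exp ((n : ℝ) - 1)
  have : (n : ℝ) - 1 + 1 = n := by ring
  rw [this] at h
  calc Real.exp 1 * (n : ℝ) ≤ Real.exp 1 * Real.exp ((n : ℝ) - 1) := by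
        apply mul_le_mul_of_nonneg_left h (Real.exp_pos 1).le
    _ = Real.exp n := by rw [← Real.exp_add]; ring_nf

lemma stirling_arith (n : ℕ) (hn : 1 ≤ n) :
    (n.factorial : ℝ) * ((Real.sqrt (2 * Real.pi))⁻¹ * Real.exp ((n : ℝ) / 2)) /
      Real.sqrt n ^ n ≤ (n : ℝ) ^ ((n : ℝ) / 2) := by
  have hnpos : (0 : ℝ) < n := by exact_mod_cast hn
  have hsqrtpi : (0 : ℝ) < Real.sqrt (2 * Real.pi) := Real.sqrt_pos.mpr (by positivity)
  -- key inequality : e * sqrt n ≤ sqrt (2π) * exp (n/2)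
  have hkey : Real.exp 1 * Real.sqrt n ≤ Real.sqrt (2 * Real.pi) * Real.exp ((n : ℝ) / 2) := by
    have h1 : Real.exp 1 * Real.sqrt n = Real.sqrt (Real.exp 1 ^ 2 * n) := by
      rw [Real.sqrt_mul (by positivity), Real.sqrt_sq (Real.exp_pos 1).le]
    have h2 : Real.sqrt (2 * Real.pi) * Real.exp ((n : ℝ) / 2) =
        Real.sqrt (2 * Real.pi * Real.exp n) := by
      rw [Real.exp_half, ← Real.sqrt_mul (by positivity : (0:ℝ) ≤ 2 * Real.pi)]
    rw [h1, h2]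
    apply Real.sqrt_le_sqrt
    have h3 := exp_ge_e_mul n hn
    have h4 := two_pi_ge_e
    nlinarith [Real.exp_pos 1, Real.exp_pos (n : ℝ), hnpos]
  -- rewrite sqrt n ^ n
  have hpow : Real.sqrt n ^ n = (n : ℝ) ^ ((n : ℝ) / 2) := by
    rw [Real.sqrt_eq_rpow, ← Real.rpow_natCast ((n : ℝ) ^ ((1:ℝ)/2)) n,
      ← Real.rpow_mul hnpos.le]
    congr 1
    ring
  have hrpow_pos : (0 : ℝ) < (n : ℝ) ^ ((n : ℝ) / 2) := Real.rpow_pos_of_pos hnpos _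
  rw [hpow, div_le_iff₀ hrpow_pos]
  have hsq : (n : ℝ) ^ ((n : ℝ) / 2) * (n : ℝ) ^ ((n : ℝ) / 2) = (n : ℝ) ^ (n : ℕ) := by
    rw [← Real.rpow_add hnpos, ← Real.rpow_natCast (n : ℝ) n]
    congr 1
    ring
  -- use Stirling : n! ≤ e √n (n/e)^n
  have hstir := factorial_le_stirling n hn
  have hne : (n / Real.exp 1 : ℝ) ^ n = (n : ℝ) ^ (n : ℕ) / Real.exp n := by
    rw [div_pow, ← Real.exp_nat_mul]
    norm_num
  rw [hne] at hstir
  have hexp2 : Real.exp ((n : ℝ) / 2) * Real.exp ((n : ℝ) / 2) = Real.exp n := by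
    rw [← Real.exp_add]; norm_num
  have hexpn : (0 : ℝ) < Real.exp (n : ℝ) := Real.exp_pos _
  calc (n.factorial : ℝ) * ((Real.sqrt (2 * Real.pi))⁻¹ * Real.exp ((n : ℝ) / 2))
      ≤ Real.exp 1 * Real.sqrt n * ((n : ℝ) ^ (n : ℕ) / Real.exp n) *
          ((Real.sqrt (2 * Real.pi))⁻¹ * Real.exp ((n : ℝ) / 2)) := by
        apply mul_le_mul_of_nonneg_right hstir (by positivity)
    _ ≤ Real.sqrt (2 * Real.pi) * Real.exp ((n : ℝ) / 2) * ((n : ℝ) ^ (n : ℕ) / Real.exp n) *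
          ((Real.sqrt (2 * Real.pi))⁻¹ * Real.exp ((n : ℝ) / 2)) := by
        apply mul_le_mul_of_nonneg_right (mul_le_mul_of_nonneg_right hkey (by positivity))
          (by positivity)
    _ = (n : ℝ) ^ (n : ℕ) * (Real.exp ((n : ℝ) / 2) * Real.exp ((n : ℝ) / 2) / Real.exp n) *
          (Real.sqrt (2 * Real.pi) * (Real.sqrt (2 * Real.pi))⁻¹) := by ring
    _ = (n : ℝ) ^ (n : ℕ) := by
        rw [hexp2, div_self hexpn.ne', mul_inv_cancel₀ hsqrtpi.ne']
        ring
    _ = (n : ℝ) ^ ((n : ℝ) / 2) * (n : ℝ) ^ ((n : ℝ) / 2) := hsq.symm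

theorem stmt14 (σ : ℝ) (hσ : σ ∈ Set.Ioc (0:ℝ) 1) :
    (∀ s : ℝ, PsiFn σ s ∈ Set.Icc (0:ℝ) ((Real.sqrt (2 * Real.pi))⁻¹)) ∧
    (∀ n : ℕ, 1 ≤ n → ∀ s : ℝ, |iteratedDeriv n (PsiFn σ) s| ≤ (n : ℝ) ^ ((n : ℝ) / 2)) := by
  constructor
  · -- Part 1
    intro s
    have hcont : Continuous fun y : ℝ => Real.exp (-s ^ 2 * y ^ 2 / 2) / (1 + σ ^ 2 * y ^ 2) := by
      apply Continuous.div (by continuity) (by continuity)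
      intro y
      have := psi_denom_one_le σ y
      intro h; rw [h] at this; linarith
    have hnn : ∀ y : ℝ, 0 ≤ Real.exp (-s ^ 2 * y ^ 2 / 2) / (1 + σ ^ 2 * y ^ 2) := by
      intro y
      have := psi_denom_one_le σ y
      positivity
    have hle1 : ∀ y : ℝ, Real.exp (-s ^ 2 * y ^ 2 / 2) / (1 + σ ^ 2 * y ^ 2) ≤ 1 := by
      intro y
      have hd := psi_denom_one_le σ y
      rw [div_le_one (by linarith)]
      calc Real.exp (-s ^ 2 * y ^ 2 / 2) ≤ 1 := by
            apply Real.exp_le_one_iff.mpr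
            nlinarith [sq_nonneg s, sq_nonneg y, sq_nonneg (s * y)]
        _ ≤ 1 + σ ^ 2 * y ^ 2 := hd
    have hint : (0 : ℝ) ≤ ∫ y in (0:ℝ)..1, Real.exp (-s ^ 2 * y ^ 2 / 2) / (1 + σ ^ 2 * y ^ 2) :=
      intervalIntegral.integral_nonneg (by norm_num) fun y _ => hnn y
    have hub : (∫ y in (0:ℝ)..1, Real.exp (-s ^ 2 * y ^ 2 / 2) / (1 + σ ^ 2 * y ^ 2)) ≤ 1 := by
      calc (∫ y in (0:ℝ)..1, Real.exp (-s ^ 2 * y ^ 2 / 2) / (1 + σ ^ 2 * y ^ 2))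
          ≤ ∫ _ in (0:ℝ)..1, (1:ℝ) := by
            apply intervalIntegral.integral_mono_on (by norm_num)
              (hcont.intervalIntegrable 0 1) intervalIntegrable_const
            intro y _; exact hle1 y
        _ = 1 := by simp
    constructor
    · rw [PsiFn]; positivity
    · rw [PsiFn]
      calc (Real.sqrt (2 * Real.pi))⁻¹ *
            (∫ y in (0:ℝ)..1, Real.exp (-s ^ 2 * y ^ 2 / 2) / (1 + σ ^ 2 * y ^ 2))
          ≤ (Real.sqrt (2 * Real.pi))⁻¹ * 1 := by
            apply mul_le_mul_of_nonneg_left hub (by positivity)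
        _ = (Real.sqrt (2 * Real.pi))⁻¹ := mul_one _
  · -- Part 2
    intro n hn s
    have hnpos : (0 : ℝ) < n := by exact_mod_cast hn
    have hRpos : (0 : ℝ) < Real.sqrt n := Real.sqrt_pos.mpr hnpos
    set C : ℝ := (Real.sqrt (2 * Real.pi))⁻¹ * Real.exp ((n : ℝ) / 2) with hC
    have hCB : 0 ≤ C := by positivity
    have hbound : ∀ θ : ℝ, ‖PsiC σ (circleMap (s : ℂ) (Real.sqrt n) θ)‖ ≤ C := by
      intro θ
      set z := circleMap (s : ℂ) (Real.sqrt n) θ with hz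
      have hmem : z ∈ sphere (s : ℂ) (Real.sqrt n) := circleMap_mem_sphere _ hRpos.le _
      have hdist : ‖z - (s : ℂ)‖ = Real.sqrt n := by
        rw [← Complex.dist_eq]
        rwa [mem_sphere] at hmem
      have him : |z.im| ≤ Real.sqrt n := by
        have h1 : z.im = (z - (s : ℂ)).im := by simp
        rw [h1, ← hdist]
        exact Complex.abs_im_le_norm _
      have := psiC_norm_le σ him
      rwa [Real.sq_sqrt hnpos.le] at this
    have hcauchy := cauchy_estimate (psiC_differentiable σ) (s : ℂ) hRpos hCB hbound n
    calc |iteratedDeriv n (PsiFn σ) s| = |(iteratedDeriv n (PsiC σ) (s : ℂ)).re| := by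
          rw [psi_iteratedDeriv_eq]
      _ ≤ ‖iteratedDeriv n (PsiC σ) (s : ℂ)‖ := Complex.abs_re_le_norm _
      _ ≤ n.factorial * C / Real.sqrt n ^ n := hcauchy
      _ ≤ (n : ℝ) ^ ((n : ℝ) / 2) := stirling_arith n hn
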